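/- The restriction of φ to T̄_n = span{z_{A,i}} + k·1 ⊆ Q_n is a vector space isomorphism onto K_n = k[v_1,...,v_n]/(v_i² + v_i). -/

import Mathlib

namespace QnPaper

/-- The defining relations of the quadratic algebra `Q_n`:
for `A ⊆ {1,…,n}` and distinct `i, j ∉ A`,
`z_{A∪{i},j} + z_{A,i} = z_{A∪{j},i} + z_{A,j}` and
`z_{A∪{i},j} * z_{A,i} = z_{A∪{j},i} * z_{A,j}`. -/
inductive QRel (k : Type) [Field k] (n : ℕ) :
    FreeAlgebra k (Finset (Fin n) × Fin n) → FreeAlgebra k (Finset (Fin n) × Fin n) → Prop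
  | add_rel (A : Finset (Fin n)) (i j : Fin n) (hi : i ∉ A) (hj : j ∉ A) (hij : i ≠ j) :
      QRel k n (FreeAlgebra.ι k (insert i A, j) + FreeAlgebra.ι k (A, i))
        (FreeAlgebra.ι k (insert j A, i) + FreeAlgebra.ι k (A, j))
  | mul_rel (A : Finset (Fin n)) (i j : Fin n) (hi : i ∉ A) (hj : j ∉ A) (hij : i ≠ j) :
      QRel k n (FreeAlgebra.ι k (insert i A, j) * FreeAlgebra.ι k (A, i))
        (FreeAlgebra.ι k (insert j A, i) * FreeAlgebra.ι k (A, j))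

/-- The quadratic algebra `Q_n`. -/
abbrev Q (k : Type) [Field k] (n : ℕ) := RingQuot (QRel k n)

/-- The generator `z_{A,i}` of `Q_n` (only meaningful when `i ∉ A`). -/
def z (k : Type) [Field k] (n : ℕ) (A : Finset (Fin n)) (i : Fin n) : Q k n :=
  RingQuot.mkAlgHom k (QRel k n) (FreeAlgebra.ι k (A, i))
/-- The ideal generated by the elements `v i ^ 2 + v i`. -/
noncomputable def In (k : Type) [Field k] (n : ℕ) : Ideal (MvPolynomial (Fin n) k) :=
  Ideal.span (Set.range fun i : Fin n =>
    (MvPolynomial.X i ^ 2 + MvPolynomial.X i : MvPolynomial (Fin n) k))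

/-- The commutative algebra `K n`, polynomials modulo the ideal of the `v i ^ 2 + v i`. -/
abbrev Kn (k : Type) [Field k] (n : ℕ) := MvPolynomial (Fin n) k ⧸ In k n

/-- The image `w i` of `v i` in `K n`. -/
noncomputable def w (k : Type) [Field k] (n : ℕ) (i : Fin n) : Kn k n :=
  Ideal.Quotient.mk (In k n) (MvPolynomial.X i)
/-- The span of `1` together with all the generators (with `i ∉ A`). -/
def Tbar (k : Type) [Field k] (n : ℕ) : Submodule k (Q k n) :=
  Submodule.span k
    ({1} ∪ {x | ∃ (A : Finset (Fin n)) (i : Fin n), i ∉ A ∧ x = z k n A i})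

set_option synthInstance.maxHeartbeats 400000

variable (k : Type) [Field k] (n : ℕ)

open MvPolynomial Finset

noncomputable def e (S : Finset (Fin n)) : Kn k n :=
  Ideal.Quotient.mk (In k n) (∏ i ∈ S, X i)

lemma e_empty : e k n ∅ = 1 := by simp [e]

lemma e_prod_w (S : Finset (Fin n)) : e k n S = ∏ i ∈ S, w k n i := by
  simp [e, w, map_prod]

lemma mk_sq (i : Fin n) :
    Ideal.Quotient.mk (In k n) (X i ^ 2) = - Ideal.Quotient.mk (In k n) (X i) := by
  have h : Ideal.Quotient.mk (In k n) (X i ^ 2 + X i) = 0 := by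
    rw [Ideal.Quotient.eq_zero_iff_mem]
    exact Ideal.subset_span ⟨i, rfl⟩
  rw [RingHom.map_add] at h
  linear_combination h

lemma w_mul_e (i : Fin n) (S : Finset (Fin n)) (hi : i ∉ S) :
    w k n i * e k n S = e k n (insert i S) := by
  simp [e, w, ← RingHom.map_mul, Finset.prod_insert hi]

lemma e_mul_w (S : Finset (Fin n)) (i : Fin n) :
    e k n S * w k n i = if i ∈ S then - e k n S else e k n (insert i S) := by
  by_cases h : i ∈ S
  · rw [if_pos h]
    have h1 : (∏ j ∈ S, X j : MvPolynomial (Fin n) k) = (∏ j ∈ S.erase i, X j) * X i :=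
      (Finset.prod_erase_mul S _ h).symm
    have h2 : Ideal.Quotient.mk (In k n) ((∏ j ∈ S.erase i, X j) * (X i ^2 + X i)) = 0 := by
      rw [Ideal.Quotient.eq_zero_iff_mem]
      exact Ideal.mul_mem_left _ _ (Ideal.subset_span ⟨i, rfl⟩)
    have : (∏ j ∈ S, X j : MvPolynomial (Fin n) k) * X i
        = (∏ j ∈ S.erase i, X j) * (X i ^2 + X i) - (∏ j ∈ S, X j) := by
      rw [h1]; ring
    simp only [e, w, ← RingHom.map_mul]
    rw [this, RingHom.map_sub, h2]
    ring
  · rw [if_neg h, mul_comm]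
    exact w_mul_e k n i S h

lemma span_e : Submodule.span k (Set.range (e k n)) = ⊤ := by
  rw [Submodule.eq_top_iff']
  intro x
  obtain ⟨p, rfl⟩ := Ideal.Quotient.mk_surjective x
  induction p using MvPolynomial.induction_on with
  | C a =>
      have h1 : Ideal.Quotient.mk (In k n) (C a) = a • e k n ∅ := by
        rw [e_empty]
        have h2 := map_smul (Ideal.Quotient.mkₐ k (In k n)) a 1
        rw [Ideal.Quotient.mkₐ_eq_mk, map_one] at h2
        rw [← h2]
        congr 1
        rw [Algebra.smul_def, mul_one]
        rfl
      rw [h1]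
      exact Submodule.smul_mem _ _ (Submodule.subset_span (Set.mem_range_self ∅))
  | add p q hp hq => rw [RingHom.map_add]; exact Submodule.add_mem _ hp hq
  | mul_X p i hp =>
      rw [RingHom.map_mul]
      have hw : (Ideal.Quotient.mk (In k n)) (X i) = w k n i := rfl
      rw [hw]
      refine Submodule.span_induction (p := fun y _ => y * w k n i ∈ Submodule.span k (Set.range (e k n))) ?_ ?_ ?_ ?_ hp
      · rintro y ⟨S, rfl⟩
        rw [e_mul_w]
        by_cases h : i ∈ S
        · rw [if_pos h]; exact Submodule.neg_mem _ (Submodule.subset_span (Set.mem_range_self S))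
        · rw [if_neg h]; exact Submodule.subset_span (Set.mem_range_self _)
      · simp
      · intro a b _ _ ha hb; rw [add_mul]; exact Submodule.add_mem _ ha hb
      · intro a b _ hb; rw [smul_mul_assoc]; exact Submodule.smul_mem _ _ hb

noncomputable def ev (T : Finset (Fin n)) : Kn k n →ₐ[k] k :=
  Ideal.Quotient.liftₐ (In k n)
    (aeval (fun i : Fin n => if i ∈ T then (-1 : k) else 0)) (by
      intro a ha
      have : In k n ≤ RingHom.ker (aeval (R := k)
          (fun i : Fin n => if i ∈ T then (-1 : k) else 0)).toRingHom := by
        rw [In, Ideal.span_le]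
        rintro x ⟨i, rfl⟩
        simp only [SetLike.mem_coe, RingHom.mem_ker, AlgHom.toRingHom_eq_coe,
          RingHom.coe_coe, map_add, map_pow, aeval_X]
        by_cases h : i ∈ T <;> simp [h]
      exact this ha)

lemma ev_w (T : Finset (Fin n)) (i : Fin n) :
    ev k n T (w k n i) = if i ∈ T then (-1 : k) else 0 := by
  show (aeval (fun i : Fin n => if i ∈ T then (-1 : k) else 0)) (X i) = _
  rw [aeval_X]

lemma ev_e (T S : Finset (Fin n)) :
    ev k n T (e k n S) = if S ⊆ T then (-1 : k) ^ S.card else 0 := by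
  have : ev k n T (e k n S) = ∏ i ∈ S, (if i ∈ T then (-1 : k) else 0) := by
    rw [e_prod_w, map_prod]
    exact Finset.prod_congr rfl fun i _ => ev_w k n T i
  rw [this]
  by_cases h : S ⊆ T
  · rw [if_pos h, Finset.prod_congr rfl (fun i hi => if_pos (h hi)), Finset.prod_const]
  · rw [if_neg h]
    obtain ⟨i, hiS, hiT⟩ := Finset.not_subset.mp h
    exact Finset.prod_eq_zero hiS (if_neg hiT)

lemma indep_e : LinearIndependent k (e k n) := by
  rw [Fintype.linearIndependent_iff]
  intro g hg
  suffices h : ∀ m (S : Finset (Fin n)), S.card = m → g S = 0 by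
    intro S; exact h S.card S rfl
  intro m
  induction m using Nat.strong_induction_on with
  | _ m IH =>
  intro S hS
  have h0 := congrArg (ev k n S) hg
  rw [map_zero, map_sum] at h0
  have h1 : ∀ S' ∈ Finset.univ, S' ≠ S → ev k n S (g S' • e k n S') = 0 := by
    intro S' _ hne
    rw [map_smul, ev_e]
    by_cases hsub : S' ⊆ S
    · have hlt : S'.card < m := hS ▸ Finset.card_lt_card (hsub.ssubset_of_ne hne)
      rw [IH _ hlt S' rfl, zero_smul]
    · rw [if_neg hsub, smul_zero]
  rw [Finset.sum_eq_single S h1 (fun h => absurd (Finset.mem_univ S) h)] at h0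
  rw [map_smul, ev_e, if_pos (Finset.Subset.refl S), smul_eq_mul] at h0
  rcases mul_eq_zero.mp h0 with h | h
  · exact h
  · exact absurd h (pow_ne_zero _ (by norm_num))

noncomputable def u (S : Finset (Fin n)) : Kn k n :=
  if h : S.Nonempty then
    w k n (S.min' h) * ∏ j ∈ S.erase (S.min' h), (1 + w k n j)
  else 1

lemma prod_one_add (A : Finset (Fin n)) :
    ∏ j ∈ A, (1 + w k n j) = ∑ B ∈ A.powerset, ∏ j ∈ B, w k n j := by
  have := Finset.prod_add (fun j : Fin n => w k n j) (fun _ : Fin n => (1 : Kn k n)) A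
  simp only [Finset.prod_const, one_pow, mul_one] at this
  calc ∏ j ∈ A, (1 + w k n j) = ∏ j ∈ A, (w k n j + 1) := by
        exact Finset.prod_congr rfl fun j _ => add_comm _ _
    _ = ∑ B ∈ A.powerset, ∏ j ∈ B, w k n j := this

lemma u_expand (A : Finset (Fin n)) (i : Fin n) (hi : i ∉ A) :
    w k n i * ∏ j ∈ A, (1 + w k n j) = ∑ B ∈ A.powerset, e k n (insert i B) := by
  rw [prod_one_add, Finset.mul_sum]
  refine Finset.sum_congr rfl fun B hB => ?_
  have hiB : i ∉ B := fun h => hi (Finset.mem_powerset.mp hB h)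
  rw [← e_prod_w, w_mul_e k n i B hiB]

lemma u_eq (S : Finset (Fin n)) (h : S.Nonempty) :
    u k n S = ∑ B ∈ (S.erase (S.min' h)).powerset, e k n (insert (S.min' h) B) := by
  rw [u, dif_pos h, u_expand k n _ _ (Finset.notMem_erase _ _)]

lemma span_u : Submodule.span k (Set.range (u k n)) = ⊤ := by
  rw [← top_le_iff, ← span_e k n, Submodule.span_le]
  rintro x ⟨S, rfl⟩
  suffices h : ∀ m (S : Finset (Fin n)), S.card = m →
      e k n S ∈ Submodule.span k (Set.range (u k n)) from h S.card S rfl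
  intro m
  induction m using Nat.strong_induction_on with
  | _ m IH =>
  intro S hS
  by_cases h : S.Nonempty
  · set j := S.min' h with hj
    have hjS : j ∈ S := S.min'_mem h
    have hins : insert j (S.erase j) = S := Finset.insert_erase hjS
    have hmem : S.erase j ∈ (S.erase j).powerset := Finset.mem_powerset_self _
    have hsum := u_eq k n S h
    rw [← Finset.add_sum_erase _ _ hmem, hins] at hsum
    have : e k n S = u k n S - ∑ B ∈ ((S.erase j).powerset).erase (S.erase j),
        e k n (insert j B) := by rw [hsum]; ring
    rw [this]
    refine Submodule.sub_mem _ (Submodule.subset_span (Set.mem_range_self S)) ?_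
    refine Submodule.sum_mem _ fun B hB => ?_
    rw [Finset.mem_erase, Finset.mem_powerset] at hB
    have hjB : j ∉ B := fun hc => Finset.notMem_erase j S (hB.2 hc)
    have hcard : (insert j B).card < m := by
      rw [Finset.card_insert_of_notMem hjB, ← hS]
      have h1 : B.card < (S.erase j).card := Finset.card_lt_card (hB.2.ssubset_of_ne hB.1)
      have h2 : (S.erase j).card < S.card := Finset.card_erase_lt_of_mem hjS
      omega
    exact IH _ hcard _ rfl
  · rw [Finset.not_nonempty_iff_eq_empty] at h
    subst h
    rw [e_empty]
    have : u k n ∅ = 1 := by rw [u, dif_neg (by simp)]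
    exact this ▸ Submodule.subset_span (Set.mem_range_self ∅)

lemma indep_u : LinearIndependent k (u k n) := by
  apply linearIndependent_of_top_le_span_of_card_eq_finrank
  · rw [span_u]
  · rw [Module.finrank_eq_card_basis (Module.Basis.mk (indep_e k n) (span_e k n).ge)]

noncomputable def tgen (S : Finset (Fin n)) : Q k n :=
  if h : S.Nonempty then z k n (S.erase (S.min' h)) (S.min' h) else 1

lemma tgen_mem_Tbar (S : Finset (Fin n)) : tgen k n S ∈ Tbar k n := by
  rw [tgen]
  split_ifs with h
  · exact Submodule.subset_span (Or.inr ⟨_, _, Finset.notMem_erase _ _, rfl⟩)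
  · exact Submodule.subset_span (Or.inl rfl)

lemma z_rel (A : Finset (Fin n)) (i j : Fin n) (hi : i ∉ A) (hj : j ∉ A) (hij : i ≠ j) :
    z k n (insert i A) j + z k n A i = z k n (insert j A) i + z k n A j := by
  have h := RingQuot.mkAlgHom_rel k (QRel.add_rel (k := k) (n := n) A i j hi hj hij)
  rw [map_add, map_add] at h
  exact h

lemma z_mem_span_tgen : ∀ m (A : Finset (Fin n)) (i : Fin n),
    A.card * n + (i : ℕ) < m → i ∉ A →
    z k n A i ∈ Submodule.span k (Set.range (tgen k n)) := by
  intro m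
  induction m with
  | zero => intro A i h; omega
  | succ m IH =>
    intro A i hm hi
    by_cases hcase : ∀ a ∈ A, i < a
    · have hne : (insert i A).Nonempty := Finset.insert_nonempty i A
      have hmin : (insert i A).min' hne = i := by
        refine le_antisymm (Finset.min'_le _ i (Finset.mem_insert_self i A)) ?_
        refine Finset.le_min' _ _ _ fun y hy => ?_
        rcases Finset.mem_insert.mp hy with rfl | hy
        · exact le_refl _
        · exact (hcase y hy).le
      have : tgen k n (insert i A) = z k n A i := by
        rw [tgen, dif_pos hne, hmin, Finset.erase_insert hi]
      exact this ▸ Submodule.subset_span (Set.mem_range_self _)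
    · push_neg at hcase
      obtain ⟨a, haA, hai⟩ := hcase
      have hAne : A.Nonempty := ⟨a, haA⟩
      set j := A.min' hAne with hjdef
      have hjA : j ∈ A := A.min'_mem hAne
      have hji : j < i := lt_of_le_of_lt (A.min'_le a haA)
        (lt_of_le_of_ne hai (fun hc => hi (hc ▸ haA)))
      have hij : i ≠ j := (ne_of_lt hji).symm
      set A' := A.erase j with hA'def
      have hiA' : i ∉ A' := fun hc => hi (Finset.erase_subset _ _ hc)
      have hjA' : j ∉ A' := Finset.notMem_erase _ _
      have hins : insert j A' = A := Finset.insert_erase hjA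
      have hrel := z_rel k n A' i j hiA' hjA' hij
      rw [hins] at hrel
      have hz : z k n A i = z k n (insert i A') j + z k n A' i - z k n A' j :=
        eq_sub_of_add_eq hrel.symm
      have hcardA : A'.card + 1 = A.card := by
        rw [hA'def, Finset.card_erase_of_mem hjA]
        have := Finset.card_pos.mpr hAne
        omega
      have hn : 0 < n := i.pos
      have hprod : A'.card * n + n = A.card * n := by
        rw [← hcardA]; ring
      rw [hz]
      refine Submodule.sub_mem _ (Submodule.add_mem _ ?_ ?_) ?_
      · refine IH (insert i A') j ?_ (by
          intro hc
          rcases Finset.mem_insert.mp hc with h | h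
          · exact hij h.symm
          · exact hjA' h)
        have : (insert i A').card = A.card := by
          rw [Finset.card_insert_of_notMem hiA']; omega
        rw [this]
        have : (j : ℕ) < (i : ℕ) := hji
        omega
      · refine IH A' i ?_ hiA'
        have h1 : (i : ℕ) < n := i.isLt
        omega
      · refine IH A' j ?_ hjA'
        have h1 : (j : ℕ) < n := j.isLt
        omega

lemma Tbar_le_span_tgen : Tbar k n ≤ Submodule.span k (Set.range (tgen k n)) := by
  rw [Tbar, Submodule.span_le]
  rintro x (rfl | ⟨A, i, hi, rfl⟩)
  · have : tgen k n ∅ = 1 := by rw [tgen, dif_neg (by simp)]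
    exact this ▸ Submodule.subset_span (Set.mem_range_self ∅)
  · exact z_mem_span_tgen k n (A.card * n + (i : ℕ) + 1) A i (by omega) hi

lemma phi_tgen (φ : Q k n →ₐ[k] Kn k n)
    (hφ : ∀ (A : Finset (Fin n)) (i : Fin n), i ∉ A →
      φ (z k n A i) = w k n i * ∏ j ∈ A, (1 + w k n j)) (S : Finset (Fin n)) :
    φ (tgen k n S) = u k n S := by
  rw [tgen, u]
  split_ifs with h
  · exact hφ _ _ (Finset.notMem_erase _ _)
  · exact map_one φ

theorem stmt5_aux (φ : Q k n →ₐ[k] Kn k n)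
    (hφ : ∀ (A : Finset (Fin n)) (i : Fin n), i ∉ A →
      φ (z k n A i) = w k n i * ∏ j ∈ A, (1 + w k n j)) :
    Function.Bijective (fun x : Tbar k n => φ x.1) := by
  constructor
  · intro x y hxy
    simp only at hxy
    have hd : (x.1 - y.1) ∈ Tbar k n := Submodule.sub_mem _ x.2 y.2
    obtain ⟨c, hc⟩ := (Submodule.mem_span_range_iff_exists_fun k).mp (Tbar_le_span_tgen k n hd)
    have h0 : ∑ S, c S • u k n S = 0 := by
      have : φ (x.1 - y.1) = 0 := by rw [map_sub, hxy, sub_self]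
      calc ∑ S, c S • u k n S = φ (∑ S, c S • tgen k n S) := by
            rw [map_sum]
            exact (Finset.sum_congr rfl fun S _ => by
              rw [map_smul, phi_tgen k n φ hφ]).symm
        _ = 0 := by rw [hc, this]
    have hc0 := Fintype.linearIndependent_iff.mp (indep_u k n) c h0
    have hxy0 : x.1 - y.1 = 0 := by
      rw [← hc]
      simp [hc0]
    exact Subtype.ext (sub_eq_zero.mp hxy0)
  · intro y
    have hy : y ∈ Submodule.span k (Set.range (u k n)) := by
      rw [span_u]; trivial
    obtain ⟨c, hc⟩ := (Submodule.mem_span_range_iff_exists_fun k).mp hy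
    refine ⟨⟨∑ S, c S • tgen k n S,
      Submodule.sum_mem _ fun S _ => Submodule.smul_mem _ _ (tgen_mem_Tbar k n S)⟩, ?_⟩
    simp only [map_sum]
    rw [← hc]
    exact Finset.sum_congr rfl fun S _ => by rw [map_smul, phi_tgen k n φ hφ]

/-- The restriction of the homomorphism of Statement 3 to the span of `1` and the
generators is a vector-space isomorphism onto `K n`. -/
theorem stmt5 (k : Type) [Field k] (n : ℕ) (φ : Q k n →ₐ[k] Kn k n)
    (hφ : ∀ (A : Finset (Fin n)) (i : Fin n), i ∉ A →
      φ (z k n A i) = w k n i * ∏ j ∈ A, (1 + w k n j)) :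
    Function.Bijective (fun x : Tbar k n => φ x.1) := by
  exact stmt5_aux k n φ hφ
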